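/- Let p₁, p₂, p₃ be affinely independent points of the Euclidean plane E₂, let T be their convex hull, and let P be a point in the interior of T. Then the inclusion map of the frontier ∂T into E₂ \ {P} is not nullhomotopic, i.e., it cannot be contracted to a constant map within E₂ \ {P}. (This is the claim, used in the proof of Lemma 2, that there is no contraction of the boundary curve p(∂T_i) in ℝ² \ {P} when P lies inside the triangle p(T_i).) -/

import Mathlib

section Aux

open Set Metric unitInterval

private lemma tele (u : ℕ → ℂ) (hu : ∀ k, u k ≠ 0) (n : ℕ) :
    ∏ k ∈ Finset.range n, u k / u (k + 1) = u 0 / u n := by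
  induction n with
  | zero => exact (div_self (hu 0)).symm
  | succ n ih =>
    rw [Finset.prod_range_succ, ih, div_mul_div_comm, div_eq_div_iff (by simp [hu]) (hu _)]
    ring

private lemma re_pos_of_abs_lt (w : ℂ) (h : ‖w - 1‖ < 1) : 0 < w.re := by
  have h1 : |(w - 1).re| ≤ ‖w - 1‖ := Complex.abs_re_le_norm _
  have h2 : (w - 1).re = w.re - 1 := by simp
  rw [h2] at h1
  rcases abs_le.mp h1 with ⟨h3, _⟩
  linarith

/-- If `K : I × Y → ℂ` is a continuous nonvanishing map on a compact metric space `Y`,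
then `K 0` and `K 1` differ by a continuous exponential factor. -/
private lemma keyA {Y : Type} [MetricSpace Y] [CompactSpace Y] [Nonempty Y]
    (K : C(unitInterval × Y, ℂ)) (hK : ∀ p, K p ≠ 0) :
    ∃ g : C(Y, ℂ), ∀ y, K (0, y) = Complex.exp (g y) * K (1, y) := by
  obtain ⟨p₀, -, hp₀⟩ := isCompact_univ.exists_isMinOn univ_nonempty
    ((continuous_norm.comp K.continuous).continuousOn)
  set m : ℝ := ‖K p₀‖ with hm
  have hm0 : 0 < m := by simpa [hm] using (norm_pos_iff.mpr (hK p₀))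
  have hmle : ∀ p, m ≤ ‖K p‖ := fun p => hp₀ (mem_univ p)
  have huc : UniformContinuous K := CompactSpace.uniformContinuous_of_continuous K.continuous
  rw [Metric.uniformContinuous_iff] at huc
  obtain ⟨δ, hδ, hδ'⟩ := huc m hm0
  obtain ⟨n, hn⟩ := exists_nat_one_div_lt hδ
  set N : ℕ := n + 1 with hN
  have hN0 : (0:ℝ) < N := by positivity
  set t : ℕ → unitInterval := fun k => Set.projIcc 0 1 zero_le_one ((k : ℝ) / N) with ht
  have ht0 : t 0 = 0 := by
    apply Subtype.ext
    rw [ht]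
    simp only [Nat.cast_zero, zero_div, Set.coe_projIcc]
    norm_num
  have htN : t N = 1 := by
    apply Subtype.ext
    rw [ht]
    simp only [Set.coe_projIcc]
    rw [div_self (ne_of_gt hN0)]
    norm_num
  have hstep : ∀ k, dist (t k) (t (k + 1)) < δ := by
    intro k
    have h1 : dist (t k) (t (k + 1)) ≤ dist ((k : ℝ) / N) (((k + 1 : ℕ) : ℝ) / N) := by
      have := (LipschitzWith.projIcc (a := (0:ℝ)) (b := 1) zero_le_one).dist_le_mul
        ((k : ℝ) / N) (((k + 1 : ℕ) : ℝ) / N)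
      rw [NNReal.coe_one, one_mul] at this
      exact this
    have h2 : dist ((k : ℝ) / N) (((k + 1 : ℕ) : ℝ) / N) = 1 / N := by
      rw [Real.dist_eq,
        show (k : ℝ) / N - ((k + 1 : ℕ) : ℝ) / N = -(1 / N) by push_cast; ring, abs_neg,
        abs_of_pos (by positivity)]
    have h3 : (1 : ℝ) / N < δ := by
      rw [hN]; push_cast; exact hn
    calc dist (t k) (t (k + 1)) ≤ 1 / N := h1.trans_eq h2
    _ < δ := h3
  -- the ratios
  set r : ℕ → Y → ℂ := fun k y => K (t k, y) / K (t (k + 1), y) with hr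
  have hrb : ∀ k y, ‖r k y - 1‖ < 1 := by
    intro k y
    have hd : dist (K (t k, y)) (K (t (k + 1), y)) < m := by
      apply hδ'
      rw [Prod.dist_eq]
      simp only [dist_self]
      rw [max_eq_left dist_nonneg]
      exact hstep k
    have hKb : m ≤ ‖K (t (k + 1), y)‖ := hmle _
    have hKb0 : K (t (k + 1), y) ≠ 0 := hK _
    have : r k y - 1 = (K (t k, y) - K (t (k + 1), y)) / K (t (k + 1), y) := by
      simp only [hr]
      exact div_sub_one hKb0
    rw [this, norm_div]
    rw [div_lt_one (lt_of_lt_of_le hm0 hKb)]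
    calc ‖K (t k, y) - K (t (k + 1), y)‖ = dist (K (t k, y)) (K (t (k + 1), y)) := by
          rw [Complex.dist_eq]
    _ < m := hd
    _ ≤ _ := hKb
  have hrpos : ∀ k y, 0 < (r k y).re := fun k y => re_pos_of_abs_lt _ (hrb k y)
  have hrne : ∀ k y, r k y ≠ 0 := by
    intro k y h
    have := hrpos k y
    rw [h] at this
    simp at this
  have hrslit : ∀ k y, r k y ∈ Complex.slitPlane := fun k y => Or.inl (hrpos k y)
  -- the continuous logarithm
  have hKc : ∀ k, Continuous fun y => K (t k, y) :=
    fun k => K.continuous.comp (Continuous.prodMk_right (t k))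
  have hrc : ∀ k, Continuous fun y => r k y := fun k => (hKc k).div (hKc (k + 1)) fun y => hK _
  have hgc : Continuous fun y => ∑ k ∈ Finset.range N, Complex.log (r k y) := by
    apply continuous_finset_sum
    intro k _
    exact (hrc k).clog (hrslit k)
  refine ⟨⟨fun y => ∑ k ∈ Finset.range N, Complex.log (r k y), hgc⟩, fun y => ?_⟩
  have hexp : Complex.exp (∑ k ∈ Finset.range N, Complex.log (r k y))
      = K (0, y) / K (1, y) := by
    rw [Complex.exp_sum]
    have h1 : ∀ k ∈ Finset.range N, Complex.exp (Complex.log (r k y)) = r k y :=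
      fun k _ => Complex.exp_log (hrne k y)
    rw [Finset.prod_congr rfl h1]
    have := tele (fun k => K (t k, y)) (fun k => hK _) N
    simp only [hr]
    rw [this, ht0, htN]
  simp only [ContinuousMap.coe_mk]
  rw [hexp, div_mul_cancel₀ _ (hK _)]

/-- There is no continuous logarithm of `z` on the unit circle. -/
private lemma no_log_on_sphere :
    ¬ ∃ g : C(↥(Metric.sphere (0:ℂ) 1), ℂ),
      ∀ z : ↥(Metric.sphere (0:ℂ) 1), Complex.exp (g z) = (z : ℂ) := by
  rintro ⟨g, hg⟩
  have hzne : ∀ z : ↥(Metric.sphere (0:ℂ) 1), (z : ℂ) ≠ 0 := by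
    intro z h
    have := z.2
    rw [mem_sphere_iff_norm, h] at this
    simp at this
  have hnegmem : ∀ z : ↥(Metric.sphere (0:ℂ) 1), -(z : ℂ) ∈ Metric.sphere (0:ℂ) 1 := by
    intro z
    have := z.2
    simpa [mem_sphere_iff_norm] using this
  set neg : C(↥(Metric.sphere (0:ℂ) 1), ↥(Metric.sphere (0:ℂ) 1)) :=
    ⟨fun z => ⟨-(z : ℂ), hnegmem z⟩,
      Continuous.subtype_mk (continuous_subtype_val.neg) _⟩ with hneg
  set q : ↥(Metric.sphere (0:ℂ) 1) → ℝ := fun z => (g (neg z) - g z).im with hq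
  have hqc : Continuous q :=
    (Complex.continuous_im.comp ((g.continuous.comp neg.continuous).sub g.continuous))
  have hodd : ∀ z, ∃ k : ℤ, q z = (2 * k + 1) * Real.pi := by
    intro z
    have h1 : Complex.exp (g (neg z) - g z) = -1 := by
      rw [Complex.exp_sub, hg, hg]
      simp only [hneg, ContinuousMap.coe_mk]
      rw [div_eq_iff (hzne z)]
      ring
    have h2 : Complex.exp (g (neg z) - g z) = Complex.exp (Real.pi * Complex.I) := by
      rw [h1, Complex.exp_pi_mul_I]
    rw [Complex.exp_eq_exp_iff_exists_int] at h2
    obtain ⟨k, hk⟩ := h2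
    refine ⟨k, ?_⟩
    rw [hq]
    simp only [hk]
    simp [Complex.add_im, Complex.mul_im]
    ring
  -- the range of q is order-connected
  have hconn : IsConnected (Metric.sphere (0:ℂ) 1) := by
    apply isConnected_sphere ?_ 0 zero_le_one
    rw [Complex.rank_real_complex]
    norm_num
  have : ConnectedSpace ↥(Metric.sphere (0:ℂ) 1) := isConnected_iff_connectedSpace.mp hconn
  have hpre : IsPreconnected (Set.range q) := isPreconnected_range hqc
  have hoc : (Set.range q).OrdConnected := hpre.ordConnected
  set z₁ : ↥(Metric.sphere (0:ℂ) 1) := ⟨1, by simp⟩ with hz₁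
  have hnn : neg (neg z₁) = z₁ := by
    apply Subtype.ext
    simp [hneg]
  have hanti : q (neg z₁) = -q z₁ := by
    rw [hq]
    simp only [hnn]
    simp [Complex.sub_im]
  obtain ⟨k, hk⟩ := hodd z₁
  have ha0 : q z₁ ≠ 0 := by
    rw [hk]
    have hπ := Real.pi_ne_zero
    intro h
    rcases mul_eq_zero.mp h with h' | h'
    · have : (2 * k + 1 : ℤ) = 0 := by exact_mod_cast h'
      omega
    · exact hπ h'
  have hmem1 : q z₁ ∈ Set.range q := ⟨z₁, rfl⟩
  have hmem2 : -q z₁ ∈ Set.range q := ⟨neg z₁, hanti⟩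
  have h0mem : (0 : ℝ) ∈ Set.range q := by
    rcases le_total 0 (q z₁) with h | h
    · exact hoc.out hmem2 hmem1 ⟨by linarith, by linarith⟩
    · exact hoc.out hmem1 hmem2 ⟨by linarith, by linarith⟩
  obtain ⟨z, hz⟩ := h0mem
  obtain ⟨j, hj⟩ := hodd z
  rw [hz] at hj
  have hπ := Real.pi_ne_zero
  rcases mul_eq_zero.mp hj.symm with h' | h'
  · have : (2 * j + 1 : ℤ) = 0 := by exact_mod_cast h'
    omega
  · exact hπ h'

end Aux

set_option maxHeartbeats 1000000 in
/-- The claim in the proof of Lemma 2 that the boundary of a triangle cannot be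
contracted in the plane minus an interior point: if `P` lies in the interior of the
triangle `T`, then the inclusion map of the frontier `∂T` into `E₂ \ {P}` is not
nullhomotopic. -/
theorem frontier_inclusion_not_nullhomotopic
    (p₁ p₂ p₃ : EuclideanSpace ℝ (Fin 2))
    (hind : AffineIndependent ℝ ![p₁, p₂, p₃])
    (T : Set (EuclideanSpace ℝ (Fin 2)))
    (hT : T = convexHull ℝ {p₁, p₂, p₃})
    (P : EuclideanSpace ℝ (Fin 2)) (hP : P ∈ interior T)
    (ι : C(↥(frontier T), ↥({P}ᶜ : Set (EuclideanSpace ℝ (Fin 2)))))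
    (hι : ∀ x : ↥(frontier T), (ι x : EuclideanSpace ℝ (Fin 2)) = (x : EuclideanSpace ℝ (Fin 2))) :
    ¬ ι.Nullhomotopic := by
  intro hcon
  obtain ⟨y₀, ⟨H⟩⟩ := hcon
  -- T is a bounded convex set with nonempty interior
  have hTc : Convex ℝ T := hT ▸ convex_convexHull ℝ _
  have hTb : Bornology.IsBounded T := by
    rw [hT, isBounded_convexHull]
    exact (((Set.finite_singleton p₃).insert p₂).insert p₁).isBounded
  obtain ⟨h, hint, hcl, hfr⟩ :=
    exists_homeomorph_image_interior_closure_frontier_eq_unitBall hTc ⟨P, hP⟩ hTb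
  -- identify the plane with ℂ
  set L : EuclideanSpace ℝ (Fin 2) ≃ₗᵢ[ℝ] ℂ := Complex.orthonormalBasisOneI.repr.symm with hL
  set Φ : EuclideanSpace ℝ (Fin 2) ≃ₜ ℂ := h.trans L.toHomeomorph with hΦ
  have hΦim : ∀ s : Set (EuclideanSpace ℝ (Fin 2)), Φ '' s = L '' (h '' s) := by
    intro s
    rw [hΦ, Homeomorph.trans]
    simp [Set.image_image]
    rfl
  have hfrΦ : Φ '' frontier T = Metric.sphere (0 : ℂ) 1 := by
    rw [hΦim, hfr]
    have := L.image_sphere 0 1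
    rwa [map_zero] at this
  have hintΦ : Φ '' interior T = Metric.ball (0 : ℂ) 1 := by
    rw [hΦim, hint]
    have := L.image_ball 0 1
    rwa [map_zero] at this
  set Q : ℂ := Φ P with hQdef
  have hQ : Q ∈ Metric.ball (0 : ℂ) 1 := by
    rw [← hintΦ]; exact ⟨P, hP, rfl⟩
  have hQabs : ‖Q‖ < 1 := by
    simpa [Complex.dist_eq] using hQ
  -- the map from the circle to the frontier
  have hmemfr : ∀ z : ℂ, z ∈ Metric.sphere (0 : ℂ) 1 → Φ.symm z ∈ frontier T := by
    intro z hz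
    rw [← hfrΦ] at hz
    obtain ⟨w, hw, rfl⟩ := hz
    simpa using hw
  set ss : C(↥(Metric.sphere (0 : ℂ) 1), ↥(frontier T)) :=
    ⟨fun z => ⟨Φ.symm z, hmemfr z z.2⟩,
      Continuous.subtype_mk (Φ.symm.continuous.comp continuous_subtype_val) _⟩ with hss
  haveI : Nonempty ↥(Metric.sphere (0 : ℂ) 1) := ⟨⟨1, by simp⟩⟩
  have hzabs : ∀ z : ↥(Metric.sphere (0 : ℂ) 1), ‖(z : ℂ)‖ = 1 := by
    intro z
    have := z.2
    simpa [Complex.dist_eq] using this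
  -- first homotopy: z - Q  ≃  c  in ℂ \ {0}
  set c : ℂ := Φ (y₀ : EuclideanSpace ℝ (Fin 2)) - Q with hc
  have hcne : c ≠ 0 := by
    rw [hc, sub_ne_zero, hQdef]
    intro hPeq
    exact y₀.2 (Φ.injective hPeq)
  set K₂ : C(unitInterval × ↥(Metric.sphere (0 : ℂ) 1), ℂ) :=
    ⟨fun p => Φ ((H (p.1, ss p.2) : EuclideanSpace ℝ (Fin 2))) - Q,
      (Φ.continuous.comp (continuous_subtype_val.comp (H.continuous.comp
        (continuous_fst.prodMk (ss.continuous.comp continuous_snd))))).sub continuous_const⟩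
    with hK₂
  have hK₂ne : ∀ p, K₂ p ≠ 0 := by
    intro p
    rw [hK₂]
    simp only [ContinuousMap.coe_mk, sub_ne_zero, hQdef]
    intro hPeq
    exact (H (p.1, ss p.2)).2 (Φ.injective hPeq)
  obtain ⟨g₁, hg₁⟩ := keyA K₂ hK₂ne
  have hg₁' : ∀ z : ↥(Metric.sphere (0 : ℂ) 1),
      (z : ℂ) - Q = Complex.exp (g₁ z) * c := by
    intro z
    have := hg₁ z
    rw [hK₂] at this
    simp only [ContinuousMap.coe_mk] at this
    rw [H.apply_zero, H.apply_one] at this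
    rw [hι] at this
    simp only [hss, ContinuousMap.coe_mk, ContinuousMap.const_apply] at this
    rwa [Φ.apply_symm_apply] at this
  -- second homotopy: z - Q ≃ z in ℂ \ {0}
  set K₃ : C(unitInterval × ↥(Metric.sphere (0 : ℂ) 1), ℂ) :=
    ⟨fun p => (p.2 : ℂ) - (((1 - (p.1 : ℝ)) : ℝ) : ℂ) * Q,
      (continuous_subtype_val.comp continuous_snd).sub
        ((Complex.continuous_ofReal.comp
          (continuous_const.sub (continuous_subtype_val.comp continuous_fst))).mul
          continuous_const)⟩ with hK₃
  have hK₃ne : ∀ p, K₃ p ≠ 0 := by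
    rintro ⟨t, z⟩ hzero
    rw [hK₃] at hzero
    simp only [ContinuousMap.coe_mk] at hzero
    have h1 : (z : ℂ) = (((1 - (t : ℝ)) : ℝ) : ℂ) * Q := by
      rwa [sub_eq_zero] at hzero
    have h2 : ‖(((1 - (t : ℝ)) : ℝ) : ℂ) * Q‖ < 1 := by
      rw [norm_mul, Complex.norm_real, Real.norm_eq_abs]
      have ht1 : |1 - (t : ℝ)| ≤ 1 := by
        rw [abs_le]
        constructor <;> [linarith [t.2.2]; linarith [t.2.1]]
      calc |1 - (t : ℝ)| * ‖Q‖ ≤ 1 * ‖Q‖ :=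
            mul_le_mul_of_nonneg_right ht1 (norm_nonneg _)
      _ = ‖Q‖ := one_mul _
      _ < 1 := hQabs
    rw [← h1, hzabs z] at h2
    exact lt_irrefl 1 h2
  obtain ⟨g₂, hg₂⟩ := keyA K₃ hK₃ne
  have hg₂' : ∀ z : ↥(Metric.sphere (0 : ℂ) 1),
      (z : ℂ) - Q = Complex.exp (g₂ z) * (z : ℂ) := by
    intro z
    have := hg₂ z
    rw [hK₃] at this
    simp only [ContinuousMap.coe_mk] at this
    norm_num at this
    convert this using 2
  -- combine to get a continuous logarithm of z on the circle
  apply no_log_on_sphere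
  refine ⟨⟨fun z => g₁ z - g₂ z + Complex.log c,
    ((g₁.continuous.sub g₂.continuous).add continuous_const)⟩, fun z => ?_⟩
  simp only [ContinuousMap.coe_mk]
  have e1 := hg₁' z
  have e2 := hg₂' z
  have e3 : Complex.exp (g₁ z) * c = Complex.exp (g₂ z) * (z : ℂ) := by
    rw [← e1, e2]
  rw [Complex.exp_add, Complex.exp_sub, Complex.exp_log hcne]
  field_simp [Complex.exp_ne_zero]
  linear_combination e3
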